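/- Let K be a field and A a commutative K-algebra having an element t such that (1, t, t^2, …, t^{n−1}) is a K-basis of A. Let r, s, u be integers with 1 ≤ r ≤ s, u ≥ 1 and n ≥ su + r. Let X ⊆ A* be the dual annihilator of the K-span of {t^k : 0 ≤ k ≤ n−r−1}. If φ_0, …, φ_{u−1} ∈ X satisfy Σ_{i=0}^{u−1} φ_i ∘ m_{t^{is}} = 0 in A* (where m_a : A → A denotes multiplication by a), then φ_i = 0 for every i. Consequently, setting U = span_K{t^{is} : 0 ≤ i < u}, the subspace U·X of A* has dimension u·r. -/

import Mathlib

/-- Auxiliary map: `(φ_i) ↦ ∑ i, φ_i ∘ (· * t^{i s})`. -/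
noncomputable def stmt0Gmap {K : Type*} [Field K] {A : Type*} [CommRing A] [Algebra K A]
    (u s : ℕ) (t : A) (X : Submodule K (Module.Dual K A)) :
    (Fin u → X) →ₗ[K] Module.Dual K A where
  toFun φ := ∑ i : Fin u,
    ((φ i : Module.Dual K A) ∘ₗ LinearMap.mulRight K (t ^ ((i : ℕ) * s)))
  map_add' x y := by
    simp [LinearMap.add_comp, Finset.sum_add_distrib]
  map_smul' c x := by
    simp [LinearMap.smul_comp, Finset.smul_sum]

set_option maxHeartbeats 1000000 in

theorem stmt_0 (K : Type*) [Field K] (A : Type*) [CommRing A] [Algebra K A]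
    (n : ℕ) (t : A) (b : Module.Basis (Fin n) K A) (hb : ∀ i : Fin n, b i = t ^ (i : ℕ))
    (r s u : ℕ) (hr : 1 ≤ r) (hrs : r ≤ s) (hu : 1 ≤ u) (hn : s * u + r ≤ n)
    (X : Submodule K (Module.Dual K A))
    (hX : X = (Submodule.span K {x : A | ∃ k ≤ n - r - 1, x = t ^ k}).dualAnnihilator) :
    (∀ φ : Fin u → Module.Dual K A, (∀ i, φ i ∈ X) →
      (∑ i : Fin u, (φ i) ∘ₗ (LinearMap.mulLeft K (t ^ ((i : ℕ) * s)))) = 0 →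
      ∀ i, φ i = 0) ∧
    (∀ U : Submodule K A, U = Submodule.span K {x : A | ∃ i < u, x = t ^ (i * s)} →
      Module.finrank K ↥(Submodule.span K {ψ : Module.Dual K A |
        ∃ φ ∈ X, ∃ v ∈ U, ψ = φ ∘ₗ (LinearMap.mulRight K v)}) = u * r) := by
  classical
  haveI : Module.Finite K A := Module.Finite.of_basis b
  have husn : u * s + r ≤ n := by rw [mul_comm]; exact hn
  have hus1 : 1 ≤ u * s := by simpa using Nat.mul_le_mul hu (hr.trans hrs)
  have hXmem : ∀ ψ : Module.Dual K A, ψ ∈ X → ∀ k, k ≤ n - r - 1 → ψ (t ^ k) = 0 := by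
    intro ψ hψ k hk
    rw [hX, Submodule.mem_dualAnnihilator] at hψ
    exact hψ _ (Submodule.subset_span ⟨k, hk, rfl⟩)
  have part1 : ∀ φ : Fin u → Module.Dual K A, (∀ i, φ i ∈ X) →
      (∑ i : Fin u, (φ i) ∘ₗ (LinearMap.mulLeft K (t ^ ((i : ℕ) * s)))) = 0 →
      ∀ i, φ i = 0 := by
    intro φ hφ hrel
    have hrel' : ∀ a : A, ∑ i : Fin u, φ i (t ^ ((i : ℕ) * s) * a) = 0 := by
      intro a
      have := congrArg (fun f : Module.Dual K A => f a) hrel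
      simpa using this
    have key : ∀ d : ℕ, ∀ j : Fin u, u - (j : ℕ) ≤ d → φ j = 0 := by
      intro d
      induction d with
      | zero => intro j hj; have := j.isLt; omega
      | succ d ih =>
        intro j hj
        by_cases hjd : u - (j : ℕ) ≤ d
        · exact ih j hjd
        have hgt : ∀ i : Fin u, (j : ℕ) < (i : ℕ) → φ i = 0 := by
          intro i hi; exact ih i (by omega)
        have hjs : (j : ℕ) * s + s ≤ u * s := by
          have h1 : ((j : ℕ) + 1) * s ≤ u * s :=
            Nat.mul_le_mul_right s (by have := j.isLt; omega)
          simpa [add_mul] using h1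
        refine b.ext fun i0 => ?_
        rw [hb i0, LinearMap.zero_apply]
        by_cases hl : (i0 : ℕ) ≤ n - r - 1
        · exact hXmem _ (hφ j) _ hl
        · have hln : (i0 : ℕ) < n := i0.isLt
          set l := (i0 : ℕ) with hldef
          set p := (j : ℕ) * s with hp
          set q := u * s with hq
          have hpl : p + s ≤ l := by omega
          have h0 := hrel' (t ^ (l - p))
          have hsum : ∀ i : Fin u, i ∈ Finset.univ → i ≠ j →
              φ i (t ^ ((i : ℕ) * s) * t ^ (l - p)) = 0 := by
            intro i _ hij
            rcases lt_or_gt_of_ne (fun h : (i : ℕ) = (j : ℕ) => hij (Fin.ext h)) with hlt | hgt'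
            · rw [← pow_add]
              apply hXmem _ (hφ i)
              have hps : (i : ℕ) * s + s ≤ p := by
                have h2 : ((i : ℕ) + 1) * s ≤ (j : ℕ) * s :=
                  Nat.mul_le_mul_right s (Nat.succ_le_of_lt hlt)
                rw [hp]
                simpa [add_mul] using h2
              set pi := (i : ℕ) * s with hpi
              omega
            · rw [hgt i hgt', LinearMap.zero_apply]
          rw [Finset.sum_eq_single_of_mem j (Finset.mem_univ j) hsum, ← pow_add, ← hp] at h0
          rwa [Nat.add_sub_cancel' (by omega : p ≤ l)] at h0
    intro i
    exact key u i (Nat.sub_le _ _)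
  refine ⟨part1, ?_⟩
  intro U hU
  -- finrank X = r
  have hnr : n - r ≤ n := Nat.sub_le _ _
  have hWset : {x : A | ∃ k ≤ n - r - 1, x = t ^ k} =
      Set.range (fun i : Fin (n - r) => b (Fin.castLE hnr i)) := by
    ext x
    constructor
    · rintro ⟨k, hk, rfl⟩
      exact ⟨⟨k, by omega⟩, by simp [hb]⟩
    · rintro ⟨i, rfl⟩
      refine ⟨(i : ℕ), by have := i.isLt; omega, ?_⟩
      simp [hb]
  have hWrank : Module.finrank K
      (Submodule.span K {x : A | ∃ k ≤ n - r - 1, x = t ^ k}) = n - r := by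
    rw [hWset]
    have hli : LinearIndependent K (fun i : Fin (n - r) => b (Fin.castLE hnr i)) :=
      b.linearIndependent.comp _ (Fin.castLE_injective _)
    simpa using finrank_span_eq_card hli
  have hXrank : Module.finrank K X = r := by
    have h1 : Module.finrank K
        (A ⧸ Submodule.span K {x : A | ∃ k ≤ n - r - 1, x = t ^ k}) = Module.finrank K X := by
      rw [hX]
      exact LinearEquiv.finrank_eq (Subspace.quotEquivAnnihilator _)
    have h2 := Submodule.finrank_quotient_add_finrank
      (Submodule.span K {x : A | ∃ k ≤ n - r - 1, x = t ^ k})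
    have h3 : Module.finrank K A = n := by
      rw [Module.finrank_eq_card_basis b, Fintype.card_fin]
    omega
  -- the linear map G
  set G : (Fin u → X) →ₗ[K] Module.Dual K A := stmt0Gmap u s t X with hGdef
  have hGapp : ∀ φ : Fin u → X, G φ = ∑ i : Fin u,
      ((φ i : Module.Dual K A) ∘ₗ LinearMap.mulRight K (t ^ ((i : ℕ) * s))) := fun _ => rfl
  have hmm : ∀ a : A, LinearMap.mulRight K a = LinearMap.mulLeft K a := by
    intro a; ext x; simp [mul_comm]
  have hGker : LinearMap.ker G = ⊥ := by
    rw [LinearMap.ker_eq_bot']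
    intro z hz
    rw [hGapp] at hz
    have h0 := part1 (fun i => (z i : Module.Dual K A)) (fun i => (z i).2) (by simpa [hmm] using hz)
    funext i
    exact Subtype.ext (h0 i)
  have hGinj : Function.Injective G := (LinearMap.ker_eq_bot (M := Fin u → X)).mp hGker
  have hrange : LinearMap.range G = Submodule.span K {ψ : Module.Dual K A |
      ∃ φ ∈ X, ∃ v ∈ U, ψ = φ ∘ₗ (LinearMap.mulRight K v)} := by
    apply le_antisymm
    · rintro ψ ⟨φ, rfl⟩
      rw [hGapp]
      apply Submodule.sum_mem
      intro i _
      have hti : t ^ ((i : ℕ) * s) ∈ U := by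
        rw [hU]; exact Submodule.subset_span ⟨(i : ℕ), i.isLt, rfl⟩
      exact Submodule.subset_span ⟨(φ i : Module.Dual K A), (φ i).2, _, hti, rfl⟩
    · rw [Submodule.span_le]
      rintro ψ ⟨φ0, hφ0, v, hv, rfl⟩
      let L : A →ₗ[K] Module.Dual K A :=
        { toFun := fun w => φ0 ∘ₗ LinearMap.mulRight K w
          map_add' := by intro w1 w2; ext a; simp [mul_add]
          map_smul' := by intro c w; ext a; simp [mul_smul_comm] }
      have hUle : U ≤ Submodule.comap L (LinearMap.range G) := by
        rw [hU, Submodule.span_le]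
        rintro x ⟨i0, hi0, rfl⟩
        refine ⟨Pi.single (⟨i0, hi0⟩ : Fin u) ⟨φ0, hφ0⟩, ?_⟩
        rw [hGapp]
        rw [Finset.sum_eq_single_of_mem (⟨i0, hi0⟩ : Fin u) (Finset.mem_univ _)
          (fun i _ hij => by simp [Pi.single_eq_of_ne hij])]
        simp [L]
      exact hUle hv
  have h1 : Module.finrank K (Fin u → X) = Module.finrank K (LinearMap.range G) :=
    LinearEquiv.finrank_eq (LinearEquiv.ofInjective G hGinj)
  have h2 : Module.finrank K (Fin u → X) = u * r := by
    haveI : Module.Free K X := Module.Free.of_divisionRing K X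
    rw [Module.finrank_pi_fintype K]
    simp [hXrank, Finset.sum_const, mul_comm]
  rw [← hrange, ← h1, h2]
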